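/- If X and Y are sets with permutation actions of the atoms in which every element is finitely supported, and both X and Y have finitely many orbits, then the product X × Y with the diagonal action π(x,y) = (π(x), π(y)) also has finitely many orbits. -/

import Mathlib

private lemma extendPerm (j : ℕ → ℕ) :
    ∀ s : Finset ℕ, Set.InjOn j s →
    ∃ τ : Equiv.Perm ℕ, (∀ b ∈ s, τ b = j b) ∧
      ∀ x, x ∉ s → (∀ b ∈ s, j b ≠ x) → τ x = x := by
  classical
  intro s
  induction s using Finset.induction_on with
  | empty => exact fun _ => ⟨1, by simp, by simp⟩
  | @insert a s ha ih =>
    intro hinj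
    obtain ⟨τ', h1, h2⟩ := ih (hinj.mono (by simp [Finset.coe_subset, Finset.subset_insert]))
    refine ⟨Equiv.swap (τ' a) (j a) * τ', ?_, ?_⟩
    · intro b hb
      rcases Finset.mem_insert.mp hb with rfl | hbs
      · simp [Equiv.Perm.mul_apply]
      · have hb1 : j b ≠ τ' a := by
          intro h
          have : τ' b = τ' a := by rw [h1 b hbs, h]
          exact ha (τ'.injective this ▸ hbs)
        have hb2 : j b ≠ j a := by
          intro h
          have : b = a := hinj (by simp [hbs]) (by simp) h
          exact ha (this ▸ hbs)
        simp [Equiv.Perm.mul_apply, h1 b hbs, Equiv.swap_apply_of_ne_of_ne hb1 hb2]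
    · intro x hx hjx
      have hxs : x ∉ s := fun h => hx (Finset.mem_insert_of_mem h)
      have hτ'x : τ' x = x := h2 x hxs (fun b hb => hjx b (Finset.mem_insert_of_mem hb))
      have hx1 : x ≠ τ' a := by
        intro h
        have : x = a := τ'.injective (by rw [hτ'x, h])
        exact hx (this ▸ Finset.mem_insert_self a s)
      have hx2 : x ≠ j a := fun h => hjx a (Finset.mem_insert_self a s) h.symm
      simp [Equiv.Perm.mul_apply, hτ'x, Equiv.swap_apply_of_ne_of_ne hx1 hx2]

/-- If `X` and `Y` are sets with atoms (all elements finitely supported) with finitely many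
orbits, then the product `X × Y` with the diagonal action has finitely many orbits. -/
theorem stmt_6 {X Y : Type*} [MulAction (Equiv.Perm ℕ) X] [MulAction (Equiv.Perm ℕ) Y]
    (hXsupp : ∀ x : X, ∃ α : Finset ℕ,
      ∀ π : Equiv.Perm ℕ, (∀ a ∈ α, π a = a) → π • x = x)
    (hYsupp : ∀ y : Y, ∃ α : Finset ℕ,
      ∀ π : Equiv.Perm ℕ, (∀ a ∈ α, π a = a) → π • y = y)
    (hX : Finite (Quotient (MulAction.orbitRel (Equiv.Perm ℕ) X)))
    (hY : Finite (Quotient (MulAction.orbitRel (Equiv.Perm ℕ) Y))) :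
    Finite (Quotient (MulAction.orbitRel (Equiv.Perm ℕ) (X × Y))) := by
  classical
  haveI := hX
  haveI := hY
  set QX := Quotient (MulAction.orbitRel (Equiv.Perm ℕ) X) with hQX
  set QY := Quotient (MulAction.orbitRel (Equiv.Perm ℕ) Y) with hQY
  -- supports of orbit representatives
  let A : QX → Finset ℕ := fun q => (hXsupp q.out).choose
  have hA : ∀ (q : QX) (π : Equiv.Perm ℕ), (∀ a ∈ A q, π a = a) → π • q.out = q.out :=
    fun q => (hXsupp q.out).choose_spec
  let B : QY → Finset ℕ := fun p => (hYsupp p.out).choose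
  have hB : ∀ (p : QY) (π : Equiv.Perm ℕ), (∀ a ∈ B p, π a = a) → π • p.out = p.out :=
    fun p => (hYsupp p.out).choose_spec
  let N : QX → ℕ := fun q => (A q).sup id + 1
  have hAlt : ∀ (q : QX), ∀ a ∈ A q, a < N q :=
    fun q a ha => Nat.lt_succ_of_le (Finset.le_sup (f := id) ha)
  let C : QX → QY → Finset ℕ := fun q p => A q ∪ (B p).image (fun n => n + N q)
  -- agreement lemma: σ • p.out only depends on σ restricted to B p
  have agree : ∀ (p : QY) (σ₁ σ₂ : Equiv.Perm ℕ),
      (∀ b ∈ B p, σ₁ b = σ₂ b) → σ₁ • p.out = σ₂ • p.out := by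
    intro p σ₁ σ₂ hag
    have key : (σ₂⁻¹ * σ₁) • p.out = p.out := by
      apply hB p
      intro a ha
      show σ₂⁻¹ (σ₁ a) = a
      rw [hag a ha]
      exact σ₂.symm_apply_apply a
    calc σ₁ • p.out = σ₂ • (σ₂⁻¹ * σ₁) • p.out := by rw [smul_smul, mul_inv_cancel_left]
    _ = σ₂ • p.out := by rw [key]
  -- the classifying finite type
  let T := (q : QX) × (p : QY) × ({n // n ∈ B p} → {n // n ∈ C q p})
  haveI : Finite T := by infer_instance
  let g : T → Quotient (MulAction.orbitRel (Equiv.Perm ℕ) (X × Y)) := fun t =>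
    if h : ∃ σ : Equiv.Perm ℕ, ∀ b : {n // n ∈ B t.2.1}, σ b = (t.2.2 b : ℕ) then
      Quotient.mk _ (t.1.out, h.choose • t.2.1.out)
    else
      Quotient.mk _ (t.1.out, t.2.1.out)
  apply Finite.of_surjective g
  intro z
  obtain ⟨⟨x, y⟩, rfl⟩ := Quotient.exists_rep z
  set q : QX := Quotient.mk _ x with hq
  set p : QY := Quotient.mk _ y with hp
  obtain ⟨π, hπ⟩ : ∃ π : Equiv.Perm ℕ, π • x = q.out := by
    have h := Quotient.mk_out (s := MulAction.orbitRel (Equiv.Perm ℕ) X) x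
    rw [MulAction.orbitRel_apply, MulAction.mem_orbit_iff] at h
    exact h
  obtain ⟨ρ, hρ⟩ : ∃ ρ : Equiv.Perm ℕ, ρ • y = p.out := by
    have h := Quotient.mk_out (s := MulAction.orbitRel (Equiv.Perm ℕ) Y) y
    rw [MulAction.orbitRel_apply, MulAction.mem_orbit_iff] at h
    exact h
  set σ₀ : Equiv.Perm ℕ := π * ρ⁻¹ with hσ₀
  have hσ₀y : σ₀ • p.out = π • y := by
    rw [hσ₀, ← hρ, mul_smul, inv_smul_smul]
  set s : Finset ℕ := (B p).image σ₀ with hs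
  set j : ℕ → ℕ := fun n => if n ∈ A q then n else (σ₀⁻¹ n) + N q with hj
  have hinj : Set.InjOn j s := by
    intro n₁ h₁ n₂ h₂ heq
    by_cases c₁ : n₁ ∈ A q <;> by_cases c₂ : n₂ ∈ A q
    · simpa [hj, c₁, c₂] using heq
    · exfalso
      have : n₁ = σ₀⁻¹ n₂ + N q := by simpa [hj, c₁, c₂] using heq
      have := hAlt q n₁ c₁
      omega
    · exfalso
      have : σ₀⁻¹ n₁ + N q = n₂ := by simpa [hj, c₁, c₂] using heq
      have := hAlt q n₂ c₂
      omega
    · have : σ₀⁻¹ n₁ = σ₀⁻¹ n₂ := by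
        have h' : σ₀⁻¹ n₁ + N q = σ₀⁻¹ n₂ + N q := by simpa [hj, c₁, c₂] using heq
        omega
      exact σ₀⁻¹.injective this
  obtain ⟨τ, hτ1, hτ2⟩ := extendPerm j s hinj
  have hτA : ∀ a ∈ A q, τ a = a := by
    intro a haA
    by_cases has : a ∈ s
    · rw [hτ1 a has]; simp [hj, haA]
    · apply hτ2 a has
      intro b hbs heq
      by_cases hbA : b ∈ A q
      · have : b = a := by simpa [hj, hbA] using heq
        exact has (this ▸ hbs)
      · have : σ₀⁻¹ b + N q = a := by simpa [hj, hbA] using heq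
        have := hAlt q a haA
        omega
  set σ : Equiv.Perm ℕ := τ * σ₀ with hσdef
  have hmem : ∀ b ∈ B p, σ b ∈ C q p := by
    intro b hb
    have hbs : σ₀ b ∈ s := Finset.mem_image_of_mem _ hb
    have : σ b = j (σ₀ b) := hτ1 _ hbs
    rw [this]
    by_cases h : σ₀ b ∈ A q
    · simp only [hj, if_pos h]
      exact Finset.mem_union_left _ h
    · simp only [hj, if_neg h, Equiv.Perm.inv_def, Equiv.symm_apply_apply]
      exact Finset.mem_union_right _ (Finset.mem_image_of_mem _ hb)
  let f : {n // n ∈ B p} → {n // n ∈ C q p} := fun b => ⟨σ b, hmem b b.2⟩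
  refine ⟨⟨q, p, f⟩, ?_⟩
  have hex : ∃ σ' : Equiv.Perm ℕ, ∀ b : {n // n ∈ B p}, σ' b = ((f b : ℕ)) :=
    ⟨σ, fun b => rfl⟩
  show (if h : _ then _ else _) = _
  rw [dif_pos hex]
  have hch : hex.choose • p.out = σ • p.out := by
    apply agree
    intro b hb
    have := hex.choose_spec ⟨b, hb⟩
    simpa [f] using this
  rw [hch]
  apply Quotient.sound
  refine MulAction.orbitRel_apply.mpr (MulAction.mem_orbit_iff.mpr ⟨τ * π, ?_⟩)
  show ((τ * π) • x, (τ * π) • y) = (q.out, σ • p.out)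
  rw [Prod.mk.injEq]
  refine ⟨?_, ?_⟩
  · rw [mul_smul, hπ]
    exact hA q τ hτA
  · rw [mul_smul, ← hσ₀y, ← mul_smul]
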